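/- Let x₀ ∈ ℝ, δ' > 0, and let f : ℂ → ℂ be complex-differentiable on the open ball B(x₀, δ') ⊆ ℂ, with f(x) ∈ ℝ for every real x ∈ B(x₀, δ'), f(x₀) = 0, and f'(x₀) a negative real number. Then there exists δ with 0 < δ ≤ δ' such that for every z ∈ B(x₀, δ): if Im z > 0 then Im f(z) < 0, and if Im z < 0 then Im f(z) > 0. -/

import Mathlib

open Complex Metric

/-- If `f` is complex-differentiable on the ball `B(x₀, δ')` centered at a
real point, real-valued on the real points of that ball, vanishes at `x₀`, and has a negative
real derivative there, then on some smaller ball it maps the upper half-plane into the lower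
half-plane and the lower half-plane into the upper half-plane. -/
theorem stmt_1 (x₀ δ' : ℝ) (hδ' : 0 < δ') (f : ℂ → ℂ)
    (hf : DifferentiableOn ℂ f (ball (x₀ : ℂ) δ'))
    (hreal : ∀ x : ℝ, (x : ℂ) ∈ ball (x₀ : ℂ) δ' → (f x).im = 0)
    (h0 : f x₀ = 0)
    (hderiv_re : (deriv f x₀).im = 0) (hderiv_neg : (deriv f x₀).re < 0) :
    ∃ δ : ℝ, 0 < δ ∧ δ ≤ δ' ∧ ∀ z ∈ ball (x₀ : ℂ) δ,
      (0 < z.im → (f z).im < 0) ∧ (z.im < 0 → 0 < (f z).im) := by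
  -- `deriv f` is continuous on the ball
  have hanal : AnalyticOnNhd ℂ f (ball (x₀ : ℂ) δ') := hf.analyticOnNhd isOpen_ball
  have hdc : ContinuousOn (deriv f) (ball (x₀ : ℂ) δ') := hanal.deriv.continuousOn
  have hx₀mem : (x₀ : ℂ) ∈ ball (x₀ : ℂ) δ' := by simpa using hδ'
  have hca : ContinuousAt (fun z => (deriv f z).re) (x₀ : ℂ) :=
    (Complex.continuous_re.continuousAt.comp
      (hdc.continuousAt (isOpen_ball.mem_nhds hx₀mem)))
  have hev : ∀ᶠ z in nhds (x₀ : ℂ), (deriv f z).re < 0 :=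
    hca.eventually_lt continuousAt_const hderiv_neg
  rw [Metric.eventually_nhds_iff_ball] at hev
  obtain ⟨δ₀, hδ₀, hneg⟩ := hev
  refine ⟨min δ₀ δ', lt_min hδ₀ hδ', min_le_right _ _, ?_⟩
  intro z hz
  set x : ℝ := z.re with hxdef
  set y : ℝ := z.im with hydef
  have hball : ∀ t : ℝ, |t| ≤ |y| → (x : ℂ) + t * I ∈ ball (x₀ : ℂ) (min δ₀ δ') := by
    intro t ht
    rw [mem_ball] at hz ⊢
    have h1 : dist ((x : ℂ) + t * I) (x₀ : ℂ) ≤ dist z (x₀ : ℂ) := by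
      rw [Complex.dist_eq_re_im, Complex.dist_eq_re_im]
      simp only [Complex.add_re, Complex.ofReal_re, Complex.mul_re, Complex.I_re,
        Complex.ofReal_im, Complex.I_im, Complex.add_im, Complex.mul_im]
      apply Real.sqrt_le_sqrt
      have : t ^ 2 ≤ y ^ 2 := by
        have := _root_.sq_abs t ▸ _root_.sq_abs y ▸ pow_le_pow_left₀ (abs_nonneg t) ht 2
        simpa using this
      nlinarith [this]
    exact lt_of_le_of_lt h1 hz
  have hsub : ball (x₀ : ℂ) (min δ₀ δ') ⊆ ball (x₀ : ℂ) δ' :=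
    ball_subset_ball (min_le_right _ _)
  have hsub₀ : ball (x₀ : ℂ) (min δ₀ δ') ⊆ ball (x₀ : ℂ) δ₀ :=
    ball_subset_ball (min_le_left _ _)
  -- derivative of g t = Im (f (x + t I))
  set g : ℝ → ℝ := fun t => (f ((x : ℂ) + t * I)).im with hg_def
  have hg : ∀ t ∈ Set.uIcc (0 : ℝ) y, HasDerivAt g ((deriv f ((x : ℂ) + t * I)).re) t := by
    intro t ht
    have htle : |t| ≤ |y| := by
      rcases Set.mem_uIcc.mp ht with ⟨h1, h2⟩ | ⟨h1, h2⟩ <;> rw [abs_le] <;>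
        constructor <;> cases' abs_cases y with hy hy <;> linarith [hy.1, hy.2]
    have hw : (x : ℂ) + t * I ∈ ball (x₀ : ℂ) (min δ₀ δ') := hball t htle
    have hfd : DifferentiableAt ℂ f ((x : ℂ) + t * I) :=
      hf.differentiableAt (isOpen_ball.mem_nhds (hsub hw))
    have hd := hfd.hasDerivAt
    have hinner : HasDerivAt (fun s : ℝ => (x : ℂ) + s * I) I t := by
      simpa using ((Complex.ofRealCLM.hasDerivAt (x := t)).mul_const I).const_add (x : ℂ)
    have hcomp : HasDerivAt (fun s : ℝ => f ((x : ℂ) + s * I))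
        (I • deriv f ((x : ℂ) + t * I)) t :=
      by have := (hd.hasFDerivAt.restrictScalars ℝ).comp_hasDerivAt t hinner; simpa [Function.comp_def] using this
    have := (Complex.imCLM.hasFDerivAt.comp_hasDerivAt t hcomp)
    simpa [g, Complex.mul_im, Function.comp_def] using this
  have hcont : ContinuousOn g (Set.uIcc (0 : ℝ) y) :=
    fun t ht => (hg t ht).continuousAt.continuousWithinAt
  have hanti : StrictAntiOn g (Set.uIcc (0 : ℝ) y) := by
    apply strictAntiOn_of_deriv_neg (convex_uIcc 0 y) hcont
    intro t ht
    have ht' := interior_subset ht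
    rw [(hg t ht').deriv]
    have htle : |t| ≤ |y| := by
      rcases Set.mem_uIcc.mp ht' with ⟨h1, h2⟩ | ⟨h1, h2⟩ <;> rw [abs_le] <;>
        constructor <;> cases' abs_cases y with hy hy <;> linarith [hy.1, hy.2]
    exact hneg _ (hsub₀ (hball t htle))
  have hg0 : g 0 = 0 := by
    have hx : (x : ℂ) ∈ ball (x₀ : ℂ) δ' := by
      have := hball 0 (by simp)
      simpa using hsub this
    simpa [g] using hreal x hx
  have hgy : g y = (f z).im := by
    show (f ((z.re : ℂ) + (z.im : ℂ) * I)).im = (f z).im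
    rw [Complex.re_add_im]
  constructor
  · intro hy
    have := hanti Set.left_mem_uIcc Set.right_mem_uIcc hy
    rw [hg0, hgy] at this
    exact this
  · intro hy
    have := hanti Set.right_mem_uIcc Set.left_mem_uIcc hy
    rw [hg0, hgy] at this
    exact this
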